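/- For every real number c > 0 there exists a bounded invertible operator 𝒰 on the Hilbert space H := ℓ²(ℤ,ℂ) ⊕₂ ℓ²(ℤ,ℂ) which is J-unitary for J(x,y) = (y,x) (i.e. 𝒰* J 𝒰 = J = 𝒰 J 𝒰*), such that S₊(c⁻¹𝒰) = {0} and S₊(c⁻¹𝒰⁻¹) = {0}; explicitly: the only x ∈ H such that for every a > 1 there exists C ≥ 0 with ‖𝒰^N x‖ ≤ C·(c·a)^N for all N ∈ ℕ is x = 0, and likewise with 𝒰⁻¹ in place of 𝒰. -/

import Mathlib

noncomputable section
open ContinuousLinearMap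
open scoped InnerProductSpace ComplexConjugate ENNReal

/-- The Hilbert space `ℓ²(ℤ, ℂ)` of square-summable two-sided complex sequences. -/
abbrev l2 : Type := lp (fun _ : ℤ => ℂ) 2

/-- The Hilbert direct sum `ℓ²(ℤ,ℂ) ⊕₂ ℓ²(ℤ,ℂ)`. -/
abbrev Hl : Type := WithLp 2 (l2 × l2)

/-- The continuous linear equivalence between `Hl` and `l2 × l2`. -/
def e : Hl ≃L[ℂ] l2 × l2 := WithLp.prodContinuousLinearEquiv 2 ℂ l2 l2

/-- The operator `J : (x, y) ↦ (y, x)` on `ℓ²(ℤ,ℂ) ⊕₂ ℓ²(ℤ,ℂ)`. -/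
def Jop : Hl →L[ℂ] Hl :=
  ((e.symm : l2 × l2 →L[ℂ] Hl).comp
    ((ContinuousLinearMap.snd ℂ l2 l2).prod (ContinuousLinearMap.fst ℂ l2 l2))).comp
    (e : Hl →L[ℂ] l2 × l2)

/-! ### Combinatorial part: a 1-Lipschitz integer potential with oscillating slopes -/

def sg (t : ℕ) : ℤ := if Even (Nat.log 4 t) then 1 else -1

def gg : ℕ → ℤ
  | 0 => 0
  | t + 1 => gg t + sg (t + 1)

def sig (n : ℤ) : ℤ := gg n.natAbs

lemma abs_sg (t : ℕ) : |sg t| ≤ 1 := by unfold sg; split <;> simp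

lemma gg_succ (t : ℕ) : gg (t + 1) = gg t + sg (t + 1) := rfl

lemma abs_gg (t : ℕ) : |gg t| ≤ t := by
  induction t with
  | zero => simp [gg]
  | succ t ih =>
    rw [gg_succ]
    calc |gg t + sg (t+1)| ≤ |gg t| + |sg (t+1)| := abs_add_le _ _
    _ ≤ t + 1 := by have := abs_sg (t+1); push_cast; omega

lemma sg_of (j t : ℕ) (h1 : 4^j ≤ t) (h2 : t < 4^(j+1)) :
    sg t = if Even j then 1 else -1 := by
  unfold sg; rw [Nat.log_eq_of_pow_le_of_lt_pow h1 h2]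

lemma gg_block (j : ℕ) : ∀ k, k ≤ 3 * 4^j →
    gg (4^j - 1 + k) = gg (4^j - 1) + (if Even j then (k:ℤ) else -(k:ℤ)) := by
  have h1 : 1 ≤ 4^j := Nat.one_le_pow j 4 (by norm_num)
  intro k hk
  induction k with
  | zero => simp
  | succ k ih =>
    have hk' : k ≤ 3 * 4^j := by omega
    have e1 : 4^j - 1 + (k+1) = (4^j - 1 + k) + 1 := by omega
    have e2 : (4^j - 1 + k) + 1 = 4^j + k := by omega
    rw [e1, gg_succ, ih hk', e2]
    have hlt : 4^j + k < 4^(j+1) := by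
      have : (4:ℕ)^(j+1) = 4 * 4^j := by ring
      omega
    rw [sg_of j (4^j + k) (Nat.le_add_right _ _) hlt]
    split <;> push_cast <;> ring

lemma sig_coe (t : ℕ) : sig (t : ℤ) = gg t := by simp [sig]

lemma sig_neg (n : ℤ) : sig (-n) = sig n := by simp [sig]

lemma abs_dsig (n : ℤ) : |sig n - sig (n - 1)| ≤ 1 := by
  rcases le_or_gt 1 n with h | h
  · have h1 : n.natAbs = (n-1).natAbs + 1 := by omega
    rw [sig, sig, h1, gg_succ]
    simpa using abs_sg ((n-1).natAbs + 1)
  · have h1 : (n-1).natAbs = n.natAbs + 1 := by omega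
    rw [sig, sig, h1, gg_succ]
    rw [show gg n.natAbs - (gg n.natAbs + sg (n.natAbs + 1)) = -(sg (n.natAbs+1)) by ring, abs_neg]
    exact abs_sg _

/-- Oscillation: from any base `b`, beyond any `M`, the increment of `sig` over some
window of length `N` is at least `N/5` in the direction given by `ε`. -/
lemma osc (b : ℤ) (M : ℕ) (ε : Bool) : ∃ N : ℕ, M ≤ N ∧
    (N : ℤ) ≤ 5 * (if ε then sig (b + N) - sig b else sig b - sig (b + N)) := by
  set m : ℕ := M + b.natAbs + 1 with hm
  set j : ℕ := if ε then 2 * m else 2 * m + 1 with hj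
  have hje : (Even j) ↔ (ε = true) := by
    rcases ε <;> simp [hj, parity_simps]
  have hmj : m ≤ j := by rcases ε <;> simp [hj] <;> omega
  have hmlt : m < 4^j :=
    lt_of_lt_of_le (Nat.lt_pow_self (by norm_num)) (Nat.pow_le_pow_right (by norm_num) hmj)
  have h1 : 1 ≤ (4:ℕ)^j := Nat.one_le_pow j 4 (by norm_num)
  have hb4 : (b.natAbs : ℤ) < 4^j := by
    exact_mod_cast Nat.lt_of_lt_of_le (by omega) (le_of_lt hmlt)
  have habs : |b| ≤ (b.natAbs : ℤ) := by rw [Int.abs_eq_natAbs]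
  have hpow : ((4:ℤ)^(j+1)) = 4 * 4^j := by ring
  have hNnn : (0:ℤ) ≤ 4^(j+1) - 1 - b := by
    have hbb : b ≤ (b.natAbs : ℤ) := le_trans (le_abs_self b) habs
    have h4 : (1:ℤ) ≤ 4^j := one_le_pow₀ (by norm_num)
    omega
  set N : ℕ := (4^(j+1) - 1 - b).toNat with hN
  have hNe : (N : ℤ) = 4^(j+1) - 1 - b := Int.toNat_of_nonneg hNnn
  have hbN : b + (N:ℤ) = ((4^(j+1) - 1 : ℕ) : ℤ) := by
    push_cast [Nat.cast_sub (Nat.one_le_pow (j+1) 4 (by norm_num))]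
    omega
  have hsig : sig (b + N) = gg (4^(j+1) - 1) := by rw [hbN, sig_coe]
  have hblock : gg (4^(j+1) - 1)
      = gg (4^j - 1) + (if Even j then ((3*4^j : ℕ) : ℤ) else -((3*4^j : ℕ) : ℤ)) := by
    have e : 4^j - 1 + 3 * 4^j = 4^(j+1) - 1 := by
      have : (4:ℕ)^(j+1) = 4 * 4^j := by ring
      omega
    rw [← e]; exact gg_block j (3*4^j) le_rfl
  have hg1 : |gg (4^j - 1)| ≤ ((4^j - 1 : ℕ) : ℤ) := abs_gg _
  have hg1' : ((4^j - 1 : ℕ) : ℤ) = 4^j - 1 := by push_cast [Nat.cast_sub h1]; ring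
  have hc3 : ((3*4^j : ℕ) : ℤ) = 3 * 4^j := by push_cast; ring
  have hsigb : |sig b| ≤ (b.natAbs : ℤ) := abs_gg _
  refine ⟨N, ?_, ?_⟩
  · have h : (M : ℤ) ≤ (N : ℤ) := by
      rw [hNe]
      have hM4 : (M : ℤ) < 4^j := by
        exact_mod_cast Nat.lt_of_lt_of_le (by omega) (le_of_lt hmlt)
      have hbb : b ≤ (b.natAbs:ℤ) := le_trans (le_abs_self b) habs
      omega
    exact_mod_cast h
  · have hgbd := abs_le.mp (hg1' ▸ hg1)
    have hsb := abs_le.mp hsigb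
    have hbb : b ≤ (b.natAbs:ℤ) := le_trans (le_abs_self b) habs
    have hbb' : -(b.natAbs:ℤ) ≤ b := neg_le_of_abs_le habs
    rcases hε : ε with _ | _
    · have hodd : ¬ Even j := fun h => by
        simp [hε] at hje; exact (Nat.not_even_iff_odd.mpr hje) h
      rw [if_neg (by simp), hsig, hblock, if_neg hodd, hc3, hNe]
      omega
    · have heven : Even j := hje.mpr hε
      rw [if_pos rfl, hsig, hblock, if_pos heven, hc3, hNe]
      omega

/-! ### Weighted translation operators on `l2` -/

lemma two_toReal : (2:ℝ≥0∞).toReal = (2:ℝ) := by norm_num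

lemma summable_sq (f : l2) : Summable (fun n => ‖f n‖ ^ (2:ℝ)) := by
  have := (lp.memℓp f).summable (p := 2) (by norm_num)
  rwa [two_toReal] at this

lemma memF (v : ℤ → ℝ) (B : ℝ) (hv : ∀ n, |v n| ≤ B) (d : ℤ) (f : l2) :
    Memℓp (fun n => ((v n : ℂ) * f (n + d) : ℂ)) 2 := by
  apply memℓp_gen
  rw [two_toReal]
  have hs : Summable (fun n : ℤ => ‖f (n + d)‖ ^ (2:ℝ)) :=
    ((Equiv.addRight d).summable_iff (f := fun n => ‖f n‖ ^ (2:ℝ))).mpr (summable_sq f)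
  apply Summable.of_nonneg_of_le (fun n => by positivity) (fun n => ?_) (hs.mul_left (B^(2:ℝ)))
  have h1 : ‖(v n : ℂ) * f (n + d)‖ ≤ B * ‖f (n+d)‖ := by
    rw [norm_mul, Complex.norm_real]
    exact mul_le_mul_of_nonneg_right (hv n) (norm_nonneg _)
  calc ‖(v n : ℂ) * f (n + d)‖ ^ (2:ℝ) ≤ (B * ‖f (n+d)‖) ^ (2:ℝ) :=
        Real.rpow_le_rpow (norm_nonneg _) h1 (by norm_num)
  _ = B^(2:ℝ) * ‖f (n+d)‖^(2:ℝ) := Real.mul_rpow (le_trans (abs_nonneg _) (hv 0)) (norm_nonneg _)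

def twl (v : ℤ → ℝ) (B : ℝ) (hv : ∀ n, |v n| ≤ B) (d : ℤ) : l2 →ₗ[ℂ] l2 where
  toFun f := ⟨fun n => (v n : ℂ) * f (n + d), memF v B hv d f⟩
  map_add' f g := by
    apply lp.ext; funext n
    simp only [lp.coeFn_add, Pi.add_apply]
    change (v n : ℂ) * ((f + g) (n + d)) = (v n : ℂ) * f (n+d) + (v n : ℂ) * g (n+d)
    rw [lp.coeFn_add]; simp; ring
  map_smul' a f := by
    apply lp.ext; funext n
    change (v n : ℂ) * ((a • f) (n + d)) = (a • (⟨_, memF v B hv d f⟩ : l2)) n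
    rw [lp.coeFn_smul, lp.coeFn_smul]
    simp [Pi.smul_apply, smul_eq_mul]; ring

def tw (v : ℤ → ℝ) (B : ℝ) (hB : 0 ≤ B) (hv : ∀ n, |v n| ≤ B) (d : ℤ) : l2 →L[ℂ] l2 :=
  LinearMap.mkContinuous (twl v B hv d) B (by
    intro f
    apply lp.norm_le_of_tsum_le (by rw [two_toReal]; norm_num) (by positivity)
    rw [two_toReal]
    have hs : Summable (fun n : ℤ => ‖f (n + d)‖ ^ (2:ℝ)) :=
      ((Equiv.addRight d).summable_iff (f := fun n => ‖f n‖ ^ (2:ℝ))).mpr (summable_sq f)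
    have hmem := memF v B hv d f
    have hsum2 : Summable (fun n : ℤ => ‖(v n : ℂ) * f (n + d)‖ ^ (2:ℝ)) := by
      have := hmem.summable (p := 2) (by norm_num)
      rwa [two_toReal] at this
    have step1 : ∑' n : ℤ, ‖(twl v B hv d f) n‖ ^ (2:ℝ)
        ≤ ∑' n : ℤ, B^(2:ℝ) * ‖f (n + d)‖ ^ (2:ℝ) := by
      apply Summable.tsum_le_tsum _ hsum2 (hs.mul_left _)
      intro n
      change ‖(v n : ℂ) * f (n + d)‖ ^ (2:ℝ) ≤ _
      calc ‖(v n : ℂ) * f (n + d)‖ ^ (2:ℝ) ≤ (B * ‖f (n+d)‖) ^ (2:ℝ) := by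
            apply Real.rpow_le_rpow (norm_nonneg _) _ (by norm_num)
            rw [norm_mul, Complex.norm_real]
            exact mul_le_mul_of_nonneg_right (hv n) (norm_nonneg _)
      _ = B^(2:ℝ) * ‖f (n+d)‖^(2:ℝ) := Real.mul_rpow hB (norm_nonneg _)
    refine le_trans step1 ?_
    rw [tsum_mul_left]
    have hre := (Equiv.addRight d).tsum_eq (fun n => ‖f n‖ ^ (2:ℝ))
    simp only [Equiv.coe_addRight] at hre
    rw [hre]
    have hn := lp.norm_rpow_eq_tsum (p := 2) (by rw [two_toReal]; norm_num) f
    rw [two_toReal] at hn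
    rw [← hn, Real.mul_rpow hB (norm_nonneg f)])

lemma tw_apply (v : ℤ → ℝ) (B : ℝ) (hB : 0 ≤ B) (hv : ∀ n, |v n| ≤ B) (d : ℤ) (f : l2) (n : ℤ) :
    (tw v B hB hv d f) n = (v n : ℂ) * f (n + d) := rfl

lemma tw_inner (v v' : ℤ → ℝ) (B B' : ℝ) (hB : 0 ≤ B) (hB' : 0 ≤ B')
    (hv : ∀ n, |v n| ≤ B) (hv' : ∀ n, |v' n| ≤ B') (d : ℤ)
    (hvv : ∀ m, v' m = v (m - d)) (x y : l2) :
    ⟪tw v' B' hB' hv' (-d) x, y⟫_ℂ = ⟪x, tw v B hB hv d y⟫_ℂ := by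
  rw [lp.inner_eq_tsum, lp.inner_eq_tsum]
  simp only [RCLike.inner_apply']
  have hre := (Equiv.subRight d).tsum_eq (fun m => conj (x m) * ((v m : ℂ) * y (m + d)))
  simp only [Equiv.subRight_apply] at hre
  calc (∑' n : ℤ, conj ((tw v' B' hB' hv' (-d) x) n) * y n)
      = ∑' n : ℤ, conj (x (n - d)) * ((v (n - d) : ℂ) * y ((n - d) + d)) := by
        apply tsum_congr; intro n
        rw [tw_apply, hvv, map_mul, Complex.conj_ofReal,
          show n + -d = n - d from (sub_eq_add_neg n d).symm, sub_add_cancel]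
        ring
  _ = ∑' n : ℤ, conj (x n) * ((v n : ℂ) * y (n + d)) := hre
  _ = ∑' n : ℤ, conj (x n) * (tw v B hB hv d y) n := by
        apply tsum_congr; intro n; rw [tw_apply]

/-! ### The specific operators -/

lemma zpow_abs_le (μ : ℝ) (hμ : 1 ≤ μ) (t : ℤ) (ht : |t| ≤ 1) : |μ ^ t| ≤ μ := by
  have h0 : (0:ℝ) < μ := lt_of_lt_of_le one_pos hμ
  rw [abs_of_nonneg (zpow_nonneg h0.le t)]
  calc μ ^ t ≤ μ ^ (1:ℤ) := zpow_le_zpow_right₀ hμ (abs_le.mp ht).2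
  _ = μ := zpow_one μ

def twS (μ : ℝ) (hμ : 1 ≤ μ) (s : ℤ → ℤ) (d : ℤ) (hs : ∀ n, |s n - s (n + d)| ≤ 1) :
    l2 →L[ℂ] l2 :=
  tw (fun n => μ ^ (s n - s (n + d))) μ (le_trans zero_le_one hμ)
    (fun n => zpow_abs_le μ hμ _ (hs n)) d

lemma twS_apply (μ : ℝ) (hμ : 1 ≤ μ) (s : ℤ → ℤ) (d : ℤ) (hs : ∀ n, |s n - s (n + d)| ≤ 1)
    (f : l2) (n : ℤ) :
    (twS μ hμ s d hs f) n = ((μ ^ (s n - s (n + d)) : ℝ) : ℂ) * f (n + d) := rfl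

lemma hs_sig_m : ∀ n : ℤ, |sig n - sig (n + (-1))| ≤ 1 := fun n => by
  rw [show n + (-1:ℤ) = n - 1 by ring]; exact abs_dsig n

lemma hs_msig_m : ∀ n : ℤ, |(-sig n) - (-sig (n + (-1)))| ≤ 1 := fun n => by
  rw [show (-sig n) - (-sig (n + (-1))) = -(sig n - sig (n + (-1))) by ring, abs_neg]
  exact hs_sig_m n

lemma hs_sig_p : ∀ n : ℤ, |sig n - sig (n + 1)| ≤ 1 := fun n => by
  have h := abs_dsig (n+1)
  rw [show n + 1 - 1 = n from by ring] at h
  rwa [abs_sub_comm]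

lemma hs_msig_p : ∀ n : ℤ, |(-sig n) - (-sig (n + 1))| ≤ 1 := fun n => by
  rw [show (-sig n) - (-sig (n + 1)) = -(sig n - sig (n + 1)) by ring, abs_neg]
  exact hs_sig_p n

variable (μ : ℝ) (hμ : 1 ≤ μ)

def Aop : l2 →L[ℂ] l2 := twS μ hμ sig (-1) hs_sig_m
def A'op : l2 →L[ℂ] l2 := twS μ hμ (fun n => -sig n) (-1) hs_msig_m
def Aiop : l2 →L[ℂ] l2 := twS μ hμ sig 1 hs_sig_p
def Ai'op : l2 →L[ℂ] l2 := twS μ hμ (fun n => -sig n) 1 hs_msig_p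

lemma hμ0 (hμ' : 1 ≤ μ) : (0:ℝ) < μ := lt_of_lt_of_le one_pos hμ'

lemma twS_cancel (s : ℤ → ℤ) (d d' : ℤ) (hdd : d + d' = 0)
    (hs : ∀ n, |s n - s (n + d)| ≤ 1) (hs' : ∀ n, |s n - s (n + d')| ≤ 1) :
    (twS μ hμ s d hs).comp (twS μ hμ s d' hs') = 1 := by
  refine ContinuousLinearMap.ext fun f => lp.ext (funext fun n => ?_)
  rw [ContinuousLinearMap.coe_comp', Function.comp_apply, twS_apply, twS_apply,
    ContinuousLinearMap.one_apply,
    show (n + d) + d' = n from by rw [add_assoc, hdd, add_zero], ← mul_assoc,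
    ← Complex.ofReal_mul, ← zpow_add₀ (ne_of_gt (hμ0 μ hμ)),
    show (s n - s (n+d)) + (s (n+d) - s n) = 0 from by ring, zpow_zero]
  simp

lemma twS_pow_apply (s : ℤ → ℤ) (d : ℤ) (hs : ∀ n, |s n - s (n + d)| ≤ 1)
    (N : ℕ) (f : l2) (n : ℤ) :
    ((twS μ hμ s d hs ^ N) f) n = ((μ ^ (s n - s (n + N * d)) : ℝ) : ℂ) * f (n + N * d) := by
  induction N generalizing f with
  | zero => simp [ContinuousLinearMap.one_apply]
  | succ N ih =>
    rw [pow_succ, ContinuousLinearMap.mul_apply, ih, twS_apply]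
    have harg : n + (N:ℤ)*d + d = n + ((N+1:ℕ):ℤ)*d := by push_cast; ring
    rw [← mul_assoc, ← Complex.ofReal_mul, ← zpow_add₀ (ne_of_gt (hμ0 μ hμ)),
      show (s n - s (n + (N:ℤ)*d)) + (s (n + (N:ℤ)*d) - s (n + (N:ℤ)*d + d))
          = s n - s (n + (N:ℤ)*d + d) from by ring, harg]



lemma twS_inner (s s' : ℤ → ℤ) (d d' : ℤ) (hd : d' = -d) (hss : ∀ m, s' m = -(s m))
    (hs : ∀ n, |s n - s (n + d)| ≤ 1) (hs' : ∀ n, |s' n - s' (n + d')| ≤ 1) (x y : l2) :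
    ⟪twS μ hμ s' d' hs' x, y⟫_ℂ = ⟪x, twS μ hμ s d hs y⟫_ℂ := by
  subst hd
  unfold twS
  apply tw_inner
  intro m
  rw [hss, hss]
  rw [show m + -d = m - d from by ring, show (m - d) + d = m from by ring]
  ring_nf

/-! ### Block diagonal operators on `Hl` -/

def bd (T S : l2 →L[ℂ] l2) : Hl →L[ℂ] Hl :=
  ((e.symm : l2 × l2 →L[ℂ] Hl).comp ((T.prodMap S).comp (e : Hl →L[ℂ] l2 × l2)))

lemma bd_apply (T S : l2 →L[ℂ] l2) (z : Hl) : bd T S z = WithLp.toLp 2 (T z.fst, S z.snd) := rfl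

lemma bd_comp (T S T' S' : l2 →L[ℂ] l2) :
    (bd T S).comp (bd T' S') = bd (T.comp T') (S.comp S') :=
  ContinuousLinearMap.ext fun _ => rfl

lemma bd_one : bd 1 1 = (1 : Hl →L[ℂ] Hl) := ContinuousLinearMap.ext fun _ => rfl

lemma bd_pow (T S : l2 →L[ℂ] l2) (N : ℕ) : (bd T S)^N = bd (T^N) (S^N) := by
  induction N with
  | zero => rw [pow_zero, pow_zero, pow_zero]; exact bd_one.symm
  | succ N ih =>
    rw [pow_succ, pow_succ, pow_succ, ih]
    exact ContinuousLinearMap.ext fun _ => rfl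

def Uop : Hl →L[ℂ] Hl := bd (Aop μ hμ) (A'op μ hμ)
def Uinvop : Hl →L[ℂ] Hl := bd (Aiop μ hμ) (Ai'op μ hμ)
def Ustarop : Hl →L[ℂ] Hl := bd (Ai'op μ hμ) (Aiop μ hμ)

lemma hAAi : (Aop μ hμ).comp (Aiop μ hμ) = 1 :=
  twS_cancel μ hμ sig (-1) 1 (by norm_num) hs_sig_m hs_sig_p
lemma hAiA : (Aiop μ hμ).comp (Aop μ hμ) = 1 :=
  twS_cancel μ hμ sig 1 (-1) (by norm_num) hs_sig_p hs_sig_m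
lemma hA'Ai' : (A'op μ hμ).comp (Ai'op μ hμ) = 1 :=
  twS_cancel μ hμ (fun n => -sig n) (-1) 1 (by norm_num) hs_msig_m hs_msig_p
lemma hAi'A' : (Ai'op μ hμ).comp (A'op μ hμ) = 1 :=
  twS_cancel μ hμ (fun n => -sig n) 1 (-1) (by norm_num) hs_msig_p hs_msig_m

lemma UUinv : (Uop μ hμ).comp (Uinvop μ hμ) = 1 := by
  rw [Uop, Uinvop, bd_comp, hAAi, hA'Ai', bd_one]

lemma UinvU : (Uinvop μ hμ).comp (Uop μ hμ) = 1 := by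
  rw [Uop, Uinvop, bd_comp, hAiA, hAi'A', bd_one]

lemma adjU : adjoint (Uop μ hμ) = Ustarop μ hμ := by
  refine ((ContinuousLinearMap.eq_adjoint_iff (Ustarop μ hμ) (Uop μ hμ)).mpr fun z w => ?_).symm
  rw [WithLp.prod_inner_apply, WithLp.prod_inner_apply]
  congr 1
  · exact twS_inner μ hμ sig (fun n => -sig n) (-1) 1 (by norm_num) (fun m => rfl)
      hs_sig_m hs_msig_p z.fst w.fst
  · exact twS_inner μ hμ (fun n => -sig n) sig (-1) 1 (by norm_num) (fun m => by simp)
      hs_msig_m hs_sig_p z.snd w.snd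

lemma Junit1 : (adjoint (Uop μ hμ)).comp (Jop.comp (Uop μ hμ)) = Jop := by
  rw [adjU]
  refine ContinuousLinearMap.ext fun z => ?_
  show WithLp.toLp 2 ((Ai'op μ hμ).comp (A'op μ hμ) z.snd, (Aiop μ hμ).comp (Aop μ hμ) z.fst) = WithLp.toLp 2 (z.snd, z.fst)
  rw [hAi'A', hAiA]
  rfl

lemma Junit2 : (Uop μ hμ).comp (Jop.comp (adjoint (Uop μ hμ))) = Jop := by
  rw [adjU]
  refine ContinuousLinearMap.ext fun z => ?_
  show WithLp.toLp 2 ((Aop μ hμ).comp (Aiop μ hμ) z.snd, (A'op μ hμ).comp (Ai'op μ hμ) z.fst) = WithLp.toLp 2 (z.snd, z.fst)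
  rw [hAAi, hA'Ai']
  rfl

/-! ### Norm estimates and growth -/

lemma Hnorm_fst_le (z : Hl) : ‖z.fst‖ ≤ ‖z‖ := by
  have h := WithLp.prod_norm_sq_eq_of_L2 z
  nlinarith [norm_nonneg z, norm_nonneg z.fst, norm_nonneg z.snd]

lemma Hnorm_snd_le (z : Hl) : ‖z.snd‖ ≤ ‖z‖ := by
  have h := WithLp.prod_norm_sq_eq_of_L2 z
  nlinarith [norm_nonneg z, norm_nonneg z.fst, norm_nonneg z.snd]

lemma exists_coord (f : l2) (hf : f ≠ 0) : ∃ n, f n ≠ 0 := by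
  by_contra h
  push_neg at h
  exact hf (lp.ext (funext fun n => by simpa using h n))

lemma pow_five (ν : ℝ) (hν : 1 ≤ ν) (N : ℕ) (E : ℤ) (h : (N:ℤ) ≤ 5*E) :
    ν^N ≤ (ν^5) ^ E := by
  have h0 : ν ≠ 0 := ne_of_gt (lt_of_lt_of_le one_pos hν)
  rw [show (ν^5 : ℝ) = ν ^ ((5:ℕ):ℤ) from (zpow_natCast ν 5).symm, ← zpow_mul,
    ← zpow_natCast ν N]
  exact zpow_le_zpow_right₀ hν (by push_cast; omega)

lemma no_slow (c : ℝ) (hc : 0 < c) (T : Hl →L[ℂ] Hl) (z : Hl) (r : ℝ) (hr : 0 < r)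
    (hg : ∀ M : ℕ, ∃ N, M ≤ N ∧ (c+2)^N * r ≤ ‖(T^N) z‖)
    (h : ∀ a : ℝ, 1 < a → ∃ C, 0 ≤ C ∧ ∀ N, ‖(T^N) z‖ ≤ C * (c*a)^N) : False := by
  obtain ⟨C, hC0, hCb⟩ := h ((c+1)/c) (by rw [lt_div_iff₀ hc]; linarith)
  have hca : c * ((c+1)/c) = c + 1 := by field_simp
  rw [hca] at hCb
  have hq : 1 < (c+2)/(c+1) := by rw [lt_div_iff₀ (by linarith)]; linarith
  obtain ⟨M, hM⟩ := pow_unbounded_of_one_lt (C/r) hq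
  obtain ⟨N, hNM, hNg⟩ := hg M
  have h1 : C / r < ((c+2)/(c+1))^N :=
    lt_of_lt_of_le hM (pow_le_pow_right₀ (le_of_lt hq) hNM)
  rw [div_pow, div_lt_div_iff₀ hr (pow_pos (by linarith : (0:ℝ) < c+1) N)] at h1
  have h5 : (c+2)^N * r ≤ C * (c+1)^N := le_trans hNg (hCb N)
  linarith

lemma growth_case (c : ℝ) (hc : 0 < c) (hμ' : 1 ≤ (c+2)^5) (s : ℤ → ℤ) (d : ℤ)
    (hs : ∀ n, |s n - s (n + d)| ≤ 1) (f : l2) (n₀ : ℤ) (hf : f n₀ ≠ 0)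
    (hE : ∀ M : ℕ, ∃ N : ℕ, M ≤ N ∧ (N:ℤ) ≤ 5 * (s (n₀ - N*d) - s n₀)) :
    ∀ M : ℕ, ∃ N, M ≤ N ∧
      (c+2)^N * ‖f n₀‖ ≤ ‖(twS ((c+2)^5) hμ' s d hs ^ N) f‖ := by
  intro M
  obtain ⟨N, hNM, hNE⟩ := hE M
  refine ⟨N, hNM, ?_⟩
  have happ := twS_pow_apply ((c+2)^5) hμ' s d hs N f (n₀ - N*d)
  rw [show n₀ - (N:ℤ)*d + (N:ℤ)*d = n₀ from by ring] at happ
  have hnorm : ‖((twS ((c+2)^5) hμ' s d hs ^ N) f) (n₀ - N*d)‖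
      = ((c+2)^5 : ℝ)^(s (n₀ - N*d) - s n₀) * ‖f n₀‖ := by
    rw [happ, norm_mul, Complex.norm_real, Real.norm_eq_abs,
      abs_of_nonneg (zpow_nonneg (by positivity) _)]
  have hlow : (c+2)^N ≤ ((c+2)^5 : ℝ)^(s (n₀ - N*d) - s n₀) :=
    pow_five (c+2) (by linarith) N _ hNE
  calc (c+2)^N * ‖f n₀‖ ≤ ((c+2)^5 : ℝ)^(s (n₀ - N*d) - s n₀) * ‖f n₀‖ :=
        mul_le_mul_of_nonneg_right hlow (norm_nonneg _)
  _ = ‖((twS ((c+2)^5) hμ' s d hs ^ N) f) (n₀ - N*d)‖ := hnorm.symm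
  _ ≤ ‖(twS ((c+2)^5) hμ' s d hs ^ N) f‖ := lp.norm_apply_le_norm (by norm_num) _ _

lemma bd_pow_fst_le (T S : l2 →L[ℂ] l2) (N : ℕ) (x : Hl) :
    ‖(T ^ N) x.fst‖ ≤ ‖(bd T S ^ N) x‖ := by
  rw [bd_pow]
  exact Hnorm_fst_le (bd _ _ x)

lemma bd_pow_snd_le (T S : l2 →L[ℂ] l2) (N : ℕ) (x : Hl) :
    ‖(S ^ N) x.snd‖ ≤ ‖(bd T S ^ N) x‖ := by
  rw [bd_pow]
  exact Hnorm_snd_le (bd _ _ x)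

set_option maxHeartbeats 1000000 in
/-- For every `c > 0` there is a bounded invertible `J`-unitary operator `𝒰` on
`ℓ²(ℤ,ℂ) ⊕₂ ℓ²(ℤ,ℂ)` with `S₊(c⁻¹𝒰) = {0} = S₊(c⁻¹𝒰⁻¹)`. -/
theorem stmt6 (c : ℝ) (hc : 0 < c) :
    ∃ U Uinv : Hl →L[ℂ] Hl,
      U.comp Uinv = 1 ∧ Uinv.comp U = 1 ∧
      (adjoint U).comp (Jop.comp U) = Jop ∧
      U.comp (Jop.comp (adjoint U)) = Jop ∧
      (∀ x : Hl,
        (∀ a : ℝ, 1 < a → ∃ C : ℝ, 0 ≤ C ∧ ∀ N : ℕ, ‖(U ^ N) x‖ ≤ C * (c * a) ^ N) → x = 0) ∧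
      (∀ x : Hl,
        (∀ a : ℝ, 1 < a → ∃ C : ℝ, 0 ≤ C ∧ ∀ N : ℕ, ‖(Uinv ^ N) x‖ ≤ C * (c * a) ^ N) →
          x = 0) := by
  have hc2 : (1:ℝ) ≤ c + 2 := by linarith
  have hμ : (1:ℝ) ≤ (c+2)^5 := one_le_pow₀ hc2
  refine ⟨Uop ((c+2)^5) hμ, Uinvop ((c+2)^5) hμ, UUinv _ hμ, UinvU _ hμ,
    Junit1 _ hμ, Junit2 _ hμ, ?_, ?_⟩
  · -- growth for U
    intro x hx
    by_contra h0
    by_cases h1 : x.fst = 0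
    · have h2 : x.snd ≠ 0 := fun h2 =>
        h0 (by rw [show x = WithLp.toLp 2 (x.fst, x.snd) from rfl, h1, h2]; rfl)
      obtain ⟨n₀, hn₀⟩ := exists_coord x.snd h2
      refine no_slow c hc _ x ‖x.snd n₀‖ (norm_pos_iff.mpr hn₀) (fun M => ?_) hx
      have hE : ∀ M : ℕ, ∃ N : ℕ, M ≤ N ∧
          (N:ℤ) ≤ 5 * ((fun n => -sig n) (n₀ - N*(-1)) - (fun n => -sig n) n₀) := by
        intro M'
        obtain ⟨N, hNM, hNb⟩ := osc n₀ M' false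
        refine ⟨N, hNM, ?_⟩
        simp only [Bool.false_eq_true, if_false] at hNb
        show (N:ℤ) ≤ 5 * (-sig (n₀ - (N:ℤ)*(-1)) - -sig n₀)
        rw [show n₀ - (N:ℤ)*(-1) = n₀ + N from by ring]
        omega
      obtain ⟨N, hNM, hb⟩ := growth_case c hc hμ (fun n => -sig n) (-1) hs_msig_m
        x.snd n₀ hn₀ hE M
      refine ⟨N, hNM, le_trans hb ?_⟩
      rw [Uop]
      exact bd_pow_snd_le _ _ N x
    · obtain ⟨n₀, hn₀⟩ := exists_coord x.fst h1
      refine no_slow c hc _ x ‖x.fst n₀‖ (norm_pos_iff.mpr hn₀) (fun M => ?_) hx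
      have hE : ∀ M : ℕ, ∃ N : ℕ, M ≤ N ∧
          (N:ℤ) ≤ 5 * (sig (n₀ - N*(-1)) - sig n₀) := by
        intro M'
        obtain ⟨N, hNM, hNb⟩ := osc n₀ M' true
        refine ⟨N, hNM, ?_⟩
        simp only [if_true] at hNb
        rw [show n₀ - (N:ℤ)*(-1) = n₀ + N from by ring]
        omega
      obtain ⟨N, hNM, hb⟩ := growth_case c hc hμ sig (-1) hs_sig_m x.fst n₀ hn₀ hE M
      refine ⟨N, hNM, le_trans hb ?_⟩
      rw [Uop]
      exact bd_pow_fst_le _ _ N x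
  · -- growth for Uinv
    intro x hx
    by_contra h0
    by_cases h1 : x.fst = 0
    · have h2 : x.snd ≠ 0 := fun h2 =>
        h0 (by rw [show x = WithLp.toLp 2 (x.fst, x.snd) from rfl, h1, h2]; rfl)
      obtain ⟨n₀, hn₀⟩ := exists_coord x.snd h2
      refine no_slow c hc _ x ‖x.snd n₀‖ (norm_pos_iff.mpr hn₀) (fun M => ?_) hx
      have hE : ∀ M : ℕ, ∃ N : ℕ, M ≤ N ∧
          (N:ℤ) ≤ 5 * ((fun n => -sig n) (n₀ - N*1) - (fun n => -sig n) n₀) := by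
        intro M'
        obtain ⟨N, hNM, hNb⟩ := osc (-n₀) M' false
        refine ⟨N, hNM, ?_⟩
        have e1 : sig (-n₀ + N) = sig (n₀ - N*1) := by
          rw [show -n₀ + (N:ℤ) = -(n₀ - N*1) from by ring, sig_neg]
        have e2 : sig (-n₀) = sig n₀ := sig_neg n₀
        simp only [Bool.false_eq_true, if_false] at hNb
        show (N:ℤ) ≤ 5 * (-sig (n₀ - (N:ℤ)*1) - -sig n₀)
        omega
      obtain ⟨N, hNM, hb⟩ := growth_case c hc hμ (fun n => -sig n) 1 hs_msig_p
        x.snd n₀ hn₀ hE M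
      refine ⟨N, hNM, le_trans hb ?_⟩
      rw [Uinvop]
      exact bd_pow_snd_le _ _ N x
    · obtain ⟨n₀, hn₀⟩ := exists_coord x.fst h1
      refine no_slow c hc _ x ‖x.fst n₀‖ (norm_pos_iff.mpr hn₀) (fun M => ?_) hx
      have hE : ∀ M : ℕ, ∃ N : ℕ, M ≤ N ∧
          (N:ℤ) ≤ 5 * (sig (n₀ - N*1) - sig n₀) := by
        intro M'
        obtain ⟨N, hNM, hNb⟩ := osc (-n₀) M' true
        refine ⟨N, hNM, ?_⟩
        have e1 : sig (-n₀ + N) = sig (n₀ - N*1) := by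
          rw [show -n₀ + (N:ℤ) = -(n₀ - N*1) from by ring, sig_neg]
        have e2 : sig (-n₀) = sig n₀ := sig_neg n₀
        simp only [if_true] at hNb
        omega
      obtain ⟨N, hNM, hb⟩ := growth_case c hc hμ sig 1 hs_sig_p x.fst n₀ hn₀ hE M
      refine ⟨N, hNM, le_trans hb ?_⟩
      rw [Uinvop]
      exact bd_pow_fst_le _ _ N x
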